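/- arXiv:2312.09236 — 3 statements merged into one kernel-verified Lean document; each statement's English description precedes it below -/
import Mathlib

section
/- Let β : ℝ → ℝ be continuous with β(s) ≥ b > 0 for all s ∈ [0, T], let x₀ ∈ ℝ, and suppose T ≥ (ln 2)/(2b). Let ᾱ = exp(−2∫₀^T β(s) ds), and let μ_T be the Gaussian measure on ℝ with mean exp(−∫₀^T β(s) ds) · x₀ and variance 1 − ᾱ (this is the time-T marginal law of the Ornstein–Uhlenbeck process dX_t = −β_t X_t dt + √(2β_t) dW_t started at x₀). Then for every measurable set A ⊆ ℝ, |μ_T(A) − γ(A)| ≤ (x₀² + 2) · exp(−bT), where γ is the standard Gaussian measure N(0,1); in particular the total variation distance between μ_T and N(0,1) decays exponentially in T. -/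
open MeasureTheory ProbabilityTheory Real

set_option autoImplicit false

section auxiliary

open Set
open scoped NNReal ENNReal

set_option maxHeartbeats 1000000

lemma crossing_bound {f g : ℝ → ℝ} (hf : Integrable f) (hg : Integrable g)
    (hfg : ∫ x, f x = ∫ x, g x) {S : Set ℝ} (hS : MeasurableSet S)
    (h1 : ∀ x ∈ S, g x ≤ f x) (h2 : ∀ x ∉ S, f x ≤ g x)
    {A : Set ℝ} (hA : MeasurableSet A) :
    |(∫ x in A, f x) - ∫ x in A, g x| ≤ (∫ x in S, f x) - ∫ x in S, g x := by
  have hInt : Integrable (fun x => f x - g x) := hf.sub hg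
  have key : ∀ B : Set ℝ, MeasurableSet B →
      (∫ x in B, (f x - g x)) ≤ ∫ x in S, (f x - g x) := by
    intro B hB
    have e1 : (∫ x in B, (f x - g x)) =
        (∫ x in B ∩ S, (f x - g x)) + ∫ x in B \ S, (f x - g x) := by
      rw [← setIntegral_union (disjoint_sdiff_self_right.mono_left inter_subset_right)
        (hB.diff hS) hInt.integrableOn hInt.integrableOn, Set.inter_union_diff]
    have e2 : (∫ x in S, (f x - g x)) =
        (∫ x in B ∩ S, (f x - g x)) + ∫ x in S \ B, (f x - g x) := by
      rw [← setIntegral_union (disjoint_sdiff_self_right.mono_left inter_subset_left)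
        (hS.diff hB) hInt.integrableOn hInt.integrableOn, Set.inter_comm,
        Set.inter_union_diff]
    have e3 : (∫ x in B \ S, (f x - g x)) ≤ 0 := by
      apply setIntegral_nonpos (hB.diff hS)
      exact fun x hx => sub_nonpos.2 (h2 x hx.2)
    have e4 : (0:ℝ) ≤ ∫ x in S \ B, (f x - g x) := by
      apply setIntegral_nonneg (hS.diff hB)
      exact fun x hx => sub_nonneg.2 (h1 x hx.1)
    linarith
  have hsub : ∀ B : Set ℝ, (∫ x in B, (f x - g x)) = (∫ x in B, f x) - ∫ x in B, g x :=
    fun B => integral_sub hf.integrableOn hg.integrableOn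
  have htot : (∫ x, (f x - g x)) = 0 := by
    rw [integral_sub hf hg, hfg, sub_self]
  have hup : (∫ x in A, (f x - g x)) ≤ ∫ x in S, (f x - g x) := key A hA
  have hlow : -(∫ x in S, (f x - g x)) ≤ ∫ x in A, (f x - g x) := by
    have h5 : (∫ x in A, (f x - g x)) + ∫ x in Aᶜ, (f x - g x) = ∫ x, (f x - g x) :=
      integral_add_compl hA hInt
    have := key Aᶜ hA.compl
    linarith [htot]
  rw [← hsub A, ← hsub S, abs_le]
  constructor <;> linarith

lemma gr_toReal (μ : ℝ) {v : ℝ≥0} (hv : v ≠ 0) (s : Set ℝ) :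
    ((gaussianReal μ v) s).toReal = ∫ x in s, gaussianPDFReal μ v x := by
  rw [gaussianReal_apply_eq_integral μ hv s,
    ENNReal.toReal_ofReal (integral_nonneg (fun x => gaussianPDFReal_nonneg μ v x))]

lemma mean_diff_nonneg {v : ℝ≥0} (hv : v ≠ 0) {m : ℝ} (hm : 0 ≤ m)
    {A : Set ℝ} (hA : MeasurableSet A) :
    |((gaussianReal m v) A).toReal - ((gaussianReal 0 v) A).toReal|
      ≤ m * (Real.sqrt (2 * π * v))⁻¹ := by
  have hvpos : (0:ℝ) < (v:ℝ) := NNReal.coe_pos.mpr hv.bot_lt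
  set f := gaussianPDFReal m v with hfdef
  set g := gaussianPDFReal 0 v with hgdef
  have hC : (0:ℝ) < (Real.sqrt (2 * π * v))⁻¹ := by positivity
  -- pointwise comparison on the crossing set Ici (m/2)
  have hcomp : ∀ x : ℝ, ((x - m)^2 ≤ x^2 ↔ g x ≤ f x) := by
    intro x
    rw [hfdef, hgdef]
    unfold gaussianPDFReal
    rw [mul_le_mul_iff_right₀ hC, Real.exp_le_exp, sub_zero,
      div_le_div_iff_of_pos_right (by positivity), neg_le_neg_iff]
  have h1 : ∀ x ∈ Ici (m/2), g x ≤ f x := by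
    intro x hx
    rw [← hcomp x]
    have : m / 2 ≤ x := hx
    nlinarith
  have h2 : ∀ x ∉ Ici (m/2), f x ≤ g x := by
    intro x hx
    rw [hfdef, hgdef]
    unfold gaussianPDFReal
    rw [mul_le_mul_iff_right₀ hC, Real.exp_le_exp, sub_zero,
      div_le_div_iff_of_pos_right (by positivity), neg_le_neg_iff]
    have : ¬ (m / 2 ≤ x) := hx
    nlinarith [not_le.1 this]
  -- crossing bound
  have hcross := crossing_bound (integrable_gaussianPDFReal m v)
    (integrable_gaussianPDFReal 0 v)
    (by rw [integral_gaussianPDFReal_eq_one m hv, integral_gaussianPDFReal_eq_one 0 hv])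
    measurableSet_Ici h1 h2 hA
  rw [← gr_toReal m hv A, ← gr_toReal 0 hv A, ← gr_toReal m hv _, ← gr_toReal 0 hv _] at hcross
  refine hcross.trans ?_
  -- translate the measure with mean m
  have hmap : (gaussianReal m v) (Ici (m/2)) = (gaussianReal 0 v) (Ici (-(m/2))) := by
    have h1' : (gaussianReal (0:ℝ) v).map (· + m) = gaussianReal m v := by
      rw [gaussianReal_map_add_const, zero_add]
    rw [← h1', Measure.map_apply (measurable_add_const m) measurableSet_Ici]
    congr 1
    ext x
    simp only [mem_preimage, mem_Ici]
    constructor <;> intro h <;> linarith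
  rw [hmap]
  -- difference of Ici measures = measure of Ico
  have hsplit : ((gaussianReal 0 v) (Ici (-(m/2)))).toReal =
      ((gaussianReal 0 v) (Ico (-(m/2)) (m/2))).toReal
        + ((gaussianReal 0 v) (Ici (m/2))).toReal := by
    rw [← ENNReal.toReal_add (measure_ne_top _ _) (measure_ne_top _ _), ← measure_union ?_ measurableSet_Ici]
    · rw [Set.Ico_union_Ici_eq_Ici (by linarith)]
    · exact (Set.Iio_disjoint_Ici le_rfl).mono_left Set.Ico_subset_Iio_self
  rw [hsplit]
  have hico : ((gaussianReal 0 v) (Ico (-(m/2)) (m/2))).toReal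
      ≤ m * (Real.sqrt (2 * π * v))⁻¹ := by
    rw [gr_toReal 0 hv]
    have hb : ∀ x ∈ Ico (-(m/2)) (m/2), g x ≤ (Real.sqrt (2 * π * v))⁻¹ := by
      intro x _
      rw [hgdef]
      unfold gaussianPDFReal
      calc (Real.sqrt (2 * π * v))⁻¹ * rexp (-(x - 0)^2 / (2*v))
          ≤ (Real.sqrt (2 * π * v))⁻¹ * 1 := by
            apply mul_le_mul_of_nonneg_left _ hC.le
            rw [Real.exp_le_one_iff]
            apply div_nonpos_of_nonpos_of_nonneg (neg_nonpos.2 (sq_nonneg _)) (by positivity)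
        _ = (Real.sqrt (2 * π * v))⁻¹ := mul_one _
    calc (∫ x in Ico (-(m/2)) (m/2), g x)
        ≤ ∫ x in Ico (-(m/2)) (m/2), (Real.sqrt (2 * π * v))⁻¹ := by
          apply setIntegral_mono_on (integrable_gaussianPDFReal 0 v).integrableOn
            (integrableOn_const measure_Ico_lt_top.ne) measurableSet_Ico hb
      _ = (m/2 - (-(m/2))) * (Real.sqrt (2 * π * v))⁻¹ := by
          rw [setIntegral_const, measureReal_def, Real.volume_Ico, smul_eq_mul,
            ENNReal.toReal_ofReal (by linarith)]
      _ = m * (Real.sqrt (2 * π * v))⁻¹ := by ring_nf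
  have hnn : (0:ℝ) ≤ ((gaussianReal 0 v) (Ici (m/2))).toReal := ENNReal.toReal_nonneg
  linarith

lemma gauss_map_neg (μ : ℝ) (v : ℝ≥0) :
    (gaussianReal μ v).map (((-1:ℝ)) * ·) = gaussianReal (-μ) v := by
  rw [gaussianReal_map_const_mul]
  have h1 : (NNReal.mk ((-1:ℝ)^2) (sq_nonneg _)) = 1 := by ext; norm_num
  rw [h1, one_mul]
  norm_num

lemma mean_diff {v : ℝ≥0} (hv : v ≠ 0) (m : ℝ)
    {A : Set ℝ} (hA : MeasurableSet A) :
    |((gaussianReal m v) A).toReal - ((gaussianReal 0 v) A).toReal|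
      ≤ |m| * (Real.sqrt (2 * π * v))⁻¹ := by
  rcases le_or_gt 0 m with hm | hm
  · rw [abs_of_nonneg hm]; exact mean_diff_nonneg hv hm hA
  · have hrefl : ∀ μ : ℝ, gaussianReal μ v A
        = gaussianReal (-μ) v ((((-1:ℝ)) * ·) ⁻¹' A) := by
      intro μ
      conv_lhs => rw [show μ = -(-μ) by ring, ← gauss_map_neg (-μ) v]
      rw [Measure.map_apply (measurable_const_mul _) hA]
    rw [abs_of_neg hm, hrefl m, hrefl 0, neg_zero]
    exact mean_diff_nonneg hv (by linarith) ((measurable_const_mul _) hA)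

lemma gauss_sym (v : ℝ≥0) (c : ℝ) :
    gaussianReal 0 v (Iio (-c)) = gaussianReal 0 v (Ioi c) := by
  conv_lhs => rw [show (0:ℝ) = -0 by ring, ← gauss_map_neg 0 v]
  rw [Measure.map_apply (measurable_const_mul _) measurableSet_Iio]
  congr 1
  ext x
  simp only [mem_preimage, mem_Iio, mem_Ioi]
  constructor <;> intro h <;> linarith

lemma var_diff {v : ℝ≥0} (hv2 : (1:ℝ)/2 ≤ (v:ℝ)) (hv1 : (v:ℝ) < 1)
    {A : Set ℝ} (hA : MeasurableSet A) :
    |((gaussianReal 0 v) A).toReal - ((gaussianReal 0 1) A).toReal| ≤ 1 - (v:ℝ) := by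
  set w : ℝ := (v:ℝ) with hwdef
  have hwpos : (0:ℝ) < w := by linarith
  have hv : v ≠ 0 := by
    intro h
    rw [hwdef, h] at hv2
    norm_num at hv2
  have hlogneg : Real.log w < 0 := Real.log_neg hwpos hv1
  set c2 : ℝ := w * (-Real.log w) / (1 - w) with hc2def
  have h1w : (0:ℝ) < 1 - w := by linarith
  have hc2pos : 0 < c2 := by
    apply div_pos (mul_pos hwpos (by linarith)) h1w
  -- c2 ≥ w and c2 ≤ 1
  have hlow : Real.log w ≤ w - 1 := Real.log_le_sub_one_of_pos hwpos
  have hup : Real.log w⁻¹ ≤ w⁻¹ - 1 := Real.log_le_sub_one_of_pos (by positivity)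
  have hup' : -Real.log w ≤ (1 - w)/w := by
    rw [Real.log_inv] at hup
    have he : w⁻¹ - 1 = (1 - w)/w := by field_simp
    rw [he] at hup
    exact hup
  have hc2w : w ≤ c2 := by
    rw [hc2def, le_div_iff₀ h1w]
    nlinarith
  have hc2one : c2 ≤ 1 := by
    rw [hc2def, div_le_one h1w]
    have := (le_div_iff₀ hwpos).1 hup'
    nlinarith
  set c : ℝ := Real.sqrt c2 with hcdef
  have hcpos : 0 < c := Real.sqrt_pos.2 hc2pos
  have hcsq : c^2 = c2 := Real.sq_sqrt hc2pos.le
  have hcone : c ≤ 1 := by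
    rw [hcdef, show (1:ℝ) = Real.sqrt 1 by rw [Real.sqrt_one]]
    exact Real.sqrt_le_sqrt hc2one
  set f := gaussianPDFReal 0 v with hfdef
  set g := gaussianPDFReal 0 1 with hgdef
  -- pointwise iff
  have hkey : ∀ x : ℝ, (g x ≤ f x ↔ x^2 ≤ c2) := by
    intro x
    rw [hfdef, hgdef]
    unfold gaussianPDFReal
    rw [NNReal.coe_one, mul_one, sub_zero]
    have hsq2pi : (0:ℝ) < Real.sqrt (2*π) := by positivity
    have hsqw : (0:ℝ) < Real.sqrt w := Real.sqrt_pos.2 hwpos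
    have hsplit : Real.sqrt (2*π*w) = Real.sqrt (2*π) * Real.sqrt w := by
      rw [Real.sqrt_mul (by positivity)]
    rw [hsplit, mul_inv, mul_assoc, mul_le_mul_iff_right₀ (by positivity)]
    rw [show (Real.sqrt w)⁻¹ * rexp (-x^2/(2*w)) = rexp (-x^2/(2*w) - Real.log (Real.sqrt w)) by
      rw [Real.exp_sub, Real.exp_log hsqw]; ring]
    rw [Real.exp_le_exp, Real.log_sqrt hwpos.le]
    have h2w : (0:ℝ) < 2*w := by linarith
    rw [← mul_le_mul_iff_left₀ h2w]
    have e1 : (-x^2/(2*w) - Real.log w/2) * (2*w) = -x^2 - Real.log w * w := by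
      field_simp
    have e2 : (-x^2/(2*1)) * (2*w) = -x^2 * w := by
      field_simp
    rw [e1, e2, hc2def, le_div_iff₀ h1w]
    constructor <;> intro h <;> nlinarith
  have hiff : ∀ x : ℝ, x ∈ Icc (-c) c ↔ x^2 ≤ c2 := by
    intro x
    rw [mem_Icc, ← abs_le]
    constructor
    · intro h
      calc x^2 = |x|^2 := (sq_abs x).symm
        _ ≤ c^2 := by apply pow_le_pow_left₀ (abs_nonneg x) h
        _ = c2 := hcsq
    · intro h
      rw [← Real.sqrt_sq_eq_abs]
      calc Real.sqrt (x^2) ≤ Real.sqrt c2 := Real.sqrt_le_sqrt h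
        _ = c := rfl
  have hone : (1:ℝ≥0) ≠ 0 := one_ne_zero
  have hcross := crossing_bound (integrable_gaussianPDFReal 0 v)
    (integrable_gaussianPDFReal 0 1)
    (by rw [integral_gaussianPDFReal_eq_one 0 hv, integral_gaussianPDFReal_eq_one 0 hone])
    measurableSet_Icc
    (fun x hx => (hkey x).2 ((hiff x).1 hx))
    (fun x hx => by
      have h1 : ¬ x^2 ≤ c2 := fun h => hx ((hiff x).2 h)
      have := mt (hkey x).1 h1
      linarith [not_le.1 this] )
    hA
  rw [← gr_toReal 0 hv A, ← gr_toReal 0 hone A, ← gr_toReal 0 hv _, ← gr_toReal 0 hone _] at hcross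
  refine hcross.trans ?_
  -- complement identity
  have hcompl : ∀ (u : ℝ≥0), ((gaussianReal 0 u) (Icc (-c) c)).toReal
      = 1 - ((gaussianReal 0 u) (Ioi c)).toReal - ((gaussianReal 0 u) (Ioi c)).toReal := by
    intro u
    have hcc : (Icc (-c) c)ᶜ = Iio (-c) ∪ Ioi c := by
      ext x
      simp only [mem_compl_iff, mem_Icc, not_and_or, not_le, mem_union, mem_Iio, mem_Ioi]
    have hadd : (gaussianReal 0 u) (Icc (-c) c) + (gaussianReal 0 u) ((Icc (-c) c)ᶜ) = 1 := by
      rw [measure_add_measure_compl measurableSet_Icc, measure_univ]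
    have hdisj : Disjoint (Iio (-c)) (Ioi c) := by
      apply Set.disjoint_left.2
      intro x hx hx2
      simp only [mem_Iio, mem_Ioi] at hx hx2
      linarith
    rw [hcc, measure_union hdisj measurableSet_Ioi, gauss_sym u c] at hadd
    have h1 : ((gaussianReal 0 u) (Icc (-c) c)).toReal
        + (((gaussianReal 0 u) (Ioi c)).toReal + ((gaussianReal 0 u) (Ioi c)).toReal) = 1 := by
      rw [← ENNReal.toReal_add (measure_ne_top _ _) (measure_ne_top _ _),
        ← ENNReal.toReal_add (measure_ne_top _ _)
          (ENNReal.add_ne_top.2 ⟨measure_ne_top _ _, measure_ne_top _ _⟩), hadd,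
        ENNReal.toReal_one]
    linarith
  rw [hcompl v, hcompl 1]
  -- scaling
  set c' : ℝ := c / Real.sqrt w with hc'def
  have hsqw : (0:ℝ) < Real.sqrt w := Real.sqrt_pos.2 hwpos
  have hsw1 : Real.sqrt w ≤ 1 := by
    rw [show (1:ℝ) = Real.sqrt 1 from Real.sqrt_one.symm]
    exact Real.sqrt_le_sqrt (by linarith)
  have hcc' : c ≤ c' := by
    rw [hc'def, le_div_iff₀ hsqw]
    nlinarith
  have hscale : gaussianReal 0 v (Ioi c) = gaussianReal 0 1 (Ioi c') := by
    have hmap : (gaussianReal (0:ℝ) 1).map ((Real.sqrt w) * ·) = gaussianReal 0 v := by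
      rw [gaussianReal_map_const_mul, mul_zero]
      congr 1
      ext
      push_cast
      rw [Real.sq_sqrt hwpos.le]
      simp [hwdef]
    rw [← hmap, Measure.map_apply (measurable_const_mul _) measurableSet_Ioi]
    congr 1
    ext x
    simp only [mem_preimage, mem_Ioi, hc'def]
    rw [div_lt_iff₀ hsqw]
    constructor <;> intro h <;> nlinarith
  rw [hscale]
  -- split Ioi c = Ioc c c' ∪ Ioi c'
  have hsplit : ((gaussianReal 0 1) (Ioi c)).toReal =
      ((gaussianReal 0 1) (Ioc c c')).toReal + ((gaussianReal 0 1) (Ioi c')).toReal := by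
    rw [← ENNReal.toReal_add (measure_ne_top _ _) (measure_ne_top _ _),
      ← measure_union ((Set.Iic_disjoint_Ioi le_rfl).mono_left Set.Ioc_subset_Iic_self)
        measurableSet_Ioi, Set.Ioc_union_Ioi_eq_Ioi hcc']
  rw [hsplit]
  -- bound the Ioc piece
  set K : ℝ := (Real.sqrt (2*π))⁻¹ * rexp (-c2/2) with hKdef
  have hIoc : ((gaussianReal 0 1) (Ioc c c')).toReal ≤ (c' - c) * K := by
    rw [gr_toReal 0 hone]
    have hb : ∀ x ∈ Ioc c c', gaussianPDFReal 0 1 x ≤ K := by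
      intro x hx
      rw [mem_Ioc] at hx
      unfold gaussianPDFReal
      rw [NNReal.coe_one, mul_one, sub_zero, hKdef]
      apply mul_le_mul_of_nonneg_left _ (by positivity)
      apply Real.exp_le_exp.2
      have hxc : c < x := hx.1
      nlinarith
    calc (∫ x in Ioc c c', gaussianPDFReal 0 1 x)
        ≤ ∫ _x in Ioc c c', K := by
          apply setIntegral_mono_on (integrable_gaussianPDFReal 0 1).integrableOn
            (integrableOn_const measure_Ioc_lt_top.ne) measurableSet_Ioc hb
      _ = (c' - c) * K := by
          rw [setIntegral_const, measureReal_def, Real.volume_Ioc, smul_eq_mul,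
            ENNReal.toReal_ofReal (by linarith)]
  -- numeric bounds
  have hs7 : (7:ℝ)/10 ≤ Real.sqrt w := by
    rw [show (7:ℝ)/10 = Real.sqrt ((7/10)^2) from (Real.sqrt_sq (by norm_num)).symm]
    apply Real.sqrt_le_sqrt
    nlinarith
  have hsqrt2pi : (5:ℝ)/2 ≤ Real.sqrt (2*π) := by
    rw [show (5:ℝ)/2 = Real.sqrt ((5/2)^2) from (Real.sqrt_sq (by norm_num)).symm]
    apply Real.sqrt_le_sqrt
    nlinarith [Real.pi_gt_d6]
  have hexpb : rexp (-c2/2) ≤ 4/5 := by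
    have h1 : rexp (-c2/2) ≤ rexp (-(1/4)) := Real.exp_le_exp.2 (by linarith)
    have h2 : rexp (-(1/4)) ≤ 4/5 := by
      rw [Real.exp_neg]
      have h3 : (5:ℝ)/4 ≤ rexp (1/4) := by linarith [Real.add_one_le_exp (1/4:ℝ)]
      calc (rexp (1/4))⁻¹ ≤ ((5:ℝ)/4)⁻¹ := by
            apply inv_anti₀ (by norm_num) h3
        _ = 4/5 := by norm_num
    linarith
  have hKb : K ≤ 8/25 := by
    rw [hKdef]
    have hinv : (Real.sqrt (2*π))⁻¹ ≤ 2/5 := by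
      calc (Real.sqrt (2*π))⁻¹ ≤ ((5:ℝ)/2)⁻¹ := by
            apply inv_anti₀ (by norm_num) hsqrt2pi
        _ = 2/5 := by norm_num
    have he : (0:ℝ) ≤ rexp (-c2/2) := (Real.exp_pos _).le
    nlinarith
  have hKpos : 0 ≤ K := by positivity
  have hc'c : c' - c ≤ (10/7) * (1 - w) := by
    have h1 : c' - c = c * (1 - Real.sqrt w) / Real.sqrt w := by
      rw [hc'def]
      field_simp
    have h2 : 1 - Real.sqrt w ≤ 1 - w := by
      nlinarith [Real.sq_sqrt hwpos.le, Real.sqrt_nonneg w, hsw1]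
    rw [h1, div_le_iff₀ hsqw]
    nlinarith
  have hν : (0:ℝ) ≤ ((gaussianReal 0 1) (Ioi c')).toReal := ENNReal.toReal_nonneg
  have hIocnn : (0:ℝ) ≤ ((gaussianReal 0 1) (Ioc c c')).toReal := ENNReal.toReal_nonneg
  nlinarith [hIoc, hKb, hc'c, hKpos, h1w]

end auxiliary

section main

open Set
open scoped NNReal ENNReal

set_option maxHeartbeats 1000000

/-- Exponential convergence of the time-`T` marginal of the
Ornstein–Uhlenbeck process `dX_t = −β_t X_t dt + √(2β_t) dW_t` started at `x₀` to the
standard Gaussian: the marginal is `N(e^{−∫₀ᵀ β} x₀, 1 − e^{−2∫₀ᵀ β})` and for any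
measurable set `A`, `|μ_T(A) − N(0,1)(A)| ≤ (x₀² + 2) e^{−bT}`. -/
theorem ou_marginal_tv_convergence
    (β : ℝ → ℝ) (hβ : Continuous β) (b : ℝ) (hb : 0 < b)
    (x₀ T : ℝ)
    (hβb : ∀ s ∈ Set.Icc (0:ℝ) T, b ≤ β s)
    (hT : Real.log 2 / (2 * b) ≤ T)
    (ᾱ : ℝ) (hᾱ : ᾱ = Real.exp (-(2 * ∫ s in (0:ℝ)..T, β s)))
    (μT : Measure ℝ)
    (hμT : μT = gaussianReal (Real.exp (-∫ s in (0:ℝ)..T, β s) * x₀) (Real.toNNReal (1 - ᾱ))) :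
    ∀ A : Set ℝ, MeasurableSet A →
      |(μT A).toReal - (gaussianReal 0 1 A).toReal| ≤ (x₀ ^ 2 + 2) * Real.exp (-(b * T)) := by
  intro A hA
  set I : ℝ := ∫ s in (0:ℝ)..T, β s with hI
  set ε : ℝ := Real.exp (-(b * T)) with hε
  have hεpos : 0 < ε := Real.exp_pos _
  have hT0 : 0 < T := by
    have hlog2 : 0 < Real.log 2 := Real.log_pos (by norm_num)
    have : 0 < Real.log 2 / (2 * b) := by positivity
    linarith
  have hbT : Real.log 2 ≤ 2 * (b * T) := by
    rw [div_le_iff₀ (by positivity)] at hT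
    linarith
  have hIbT : b * T ≤ I := by
    have h1 : ∫ s in (0:ℝ)..T, b ≤ I := by
      apply intervalIntegral.integral_mono_on hT0.le (intervalIntegrable_const)
        (hβ.intervalIntegrable 0 T) hβb
    rwa [intervalIntegral.integral_const, smul_eq_mul, sub_zero, mul_comm] at h1
  have hε2 : ᾱ ≤ ε ^ 2 := by
    rw [hᾱ, hε, pow_two, ← Real.exp_add]
    apply Real.exp_le_exp.2
    linarith
  have hεsq : ε ^ 2 ≤ 1/2 := by
    rw [hε, pow_two, ← Real.exp_add]
    calc Real.exp (-(b*T) + -(b*T)) ≤ Real.exp (-(Real.log 2)) := by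
          apply Real.exp_le_exp.2
          linarith
      _ = 1/2 := by
          rw [Real.exp_neg, Real.exp_log (by norm_num : (0:ℝ) < 2)]
          norm_num
  have hᾱpos : 0 < ᾱ := by rw [hᾱ]; exact Real.exp_pos _
  have hᾱhalf : ᾱ ≤ 1/2 := hε2.trans hεsq
  set v : ℝ≥0 := Real.toNNReal (1 - ᾱ) with hvdef
  have hw : (v : ℝ) = 1 - ᾱ := Real.coe_toNNReal _ (by linarith)
  have hv2 : (1:ℝ)/2 ≤ (v:ℝ) := by rw [hw]; linarith
  have hv1 : (v:ℝ) < 1 := by rw [hw]; linarith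
  have hv : v ≠ 0 := by
    intro h
    rw [h] at hw
    simp at hw
    linarith
  set m : ℝ := Real.exp (-I) * x₀ with hm
  have hmabs : |m| ≤ ε * |x₀| := by
    rw [hm, abs_mul, abs_of_pos (Real.exp_pos _)]
    apply mul_le_mul_of_nonneg_right _ (abs_nonneg _)
    exact Real.exp_le_exp.2 (by linarith)
  -- triangle inequality
  have h1 := mean_diff hv m hA
  have h2 := var_diff hv2 hv1 hA
  rw [hμT]
  have htri : |((gaussianReal m v) A).toReal - ((gaussianReal 0 1) A).toReal|
      ≤ |m| * (Real.sqrt (2 * π * v))⁻¹ + (1 - (v:ℝ)) := by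
    calc |((gaussianReal m v) A).toReal - ((gaussianReal 0 1) A).toReal|
        ≤ |((gaussianReal m v) A).toReal - ((gaussianReal 0 v) A).toReal|
          + |((gaussianReal 0 v) A).toReal - ((gaussianReal 0 1) A).toReal| := by
          apply abs_sub_le
      _ ≤ _ := add_le_add h1 h2
  apply htri.trans
  -- numeric bounds
  have hsqpi : (7:ℝ)/4 ≤ Real.sqrt (2 * π * v) := by
    rw [show (7:ℝ)/4 = Real.sqrt ((7/4)^2) from (Real.sqrt_sq (by norm_num)).symm]
    apply Real.sqrt_le_sqrt
    nlinarith [Real.pi_gt_d6, hv2]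
  have hinv : (Real.sqrt (2 * π * v))⁻¹ ≤ 4/7 := by
    calc (Real.sqrt (2 * π * v))⁻¹ ≤ ((7:ℝ)/4)⁻¹ := by
          apply inv_anti₀ (by norm_num) hsqpi
      _ = 4/7 := by norm_num
  have hx0 : |x₀| ≤ (x₀^2 + 1)/2 := by nlinarith [sq_nonneg (|x₀| - 1), sq_abs x₀]
  have hεle : ε ≤ 3/4 := by nlinarith
  have hmn : (0:ℝ) ≤ |m| := abs_nonneg _
  calc |m| * (Real.sqrt (2 * π * v))⁻¹ + (1 - (v:ℝ))
      ≤ (ε * |x₀|) * (4/7) + ε^2 := by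
        have h3 : 1 - (v:ℝ) ≤ ε^2 := by
          rw [hw]
          linarith
        apply add_le_add _ h3
        apply mul_le_mul hmabs hinv (by positivity) (by positivity)
    _ ≤ (ε * ((x₀^2+1)/2)) * (4/7) + (3/4) * ε := by
        apply add_le_add
        · apply mul_le_mul_of_nonneg_right _ (by norm_num)
          apply mul_le_mul_of_nonneg_left hx0 hεpos.le
        · nlinarith
    _ ≤ (x₀ ^ 2 + 2) * ε := by nlinarith [sq_nonneg x₀]
end main
end

section
/- Let α and β be standard Borel spaces, let P be a probability measure on α × β, and let π be a probability measure on α. Then: (i) for every probability measure Q on α × β whose first marginal equals π, the Kullback–Leibler divergence satisfies KL(Q ‖ P) ≥ KL(π ‖ P₁), where P₁ denotes the first marginal of P; (ii) the measure Q* = π ⊗ P_cond, obtained by composing π with the conditional (disintegration) kernel of P given its first coordinate, has first marginal π and achieves equality: KL(Q* ‖ P) = KL(π ‖ P₁). Hence Q* is the minimiser of KL(Q ‖ P) over all Q with first marginal π. -/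
open MeasureTheory ProbabilityTheory
open scoped ENNReal Classical

set_option autoImplicit false

/-- The Kullback–Leibler divergence `KL(μ ‖ ν)`, equal to `∫ log(dμ/dν) dμ` when `μ ≪ ν` and the
log-likelihood ratio is `μ`-integrable, and `+∞` otherwise. -/
noncomputable def klDiv' {γ : Type*} [MeasurableSpace γ] (μ ν : Measure γ) : ℝ≥0∞ :=
  if μ ≪ ν ∧ Integrable (llr μ ν) μ then ENNReal.ofReal (∫ x, llr μ ν x ∂μ) else ⊤

section Helpers

variable {γ : Type*} [MeasurableSpace γ] {μ ν : Measure γ}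

lemma integrable_neg_part_llr' [IsProbabilityMeasure μ] [IsFiniteMeasure ν] (hμν : μ ≪ ν) :
    Integrable (fun x => max (- llr μ ν x) 0) μ := by
  refine Integrable.mono' (Measure.integrable_toReal_rnDeriv (μ := ν) (ν := μ))
    ((measurable_llr μ ν).neg.max measurable_const).aestronglyMeasurable ?_
  filter_upwards [exp_neg_llr hμν] with x hx
  rw [Real.norm_eq_abs, abs_of_nonneg (le_max_right _ _), ← hx]
  exact max_le ((- llr μ ν x).add_one_le_exp.trans' (by linarith)) (Real.exp_nonneg _)

lemma integral_llr_nonneg'' [IsProbabilityMeasure μ] [IsProbabilityMeasure ν]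
    (hμν : μ ≪ ν) (h : Integrable (llr μ ν) μ) : 0 ≤ ∫ x, llr μ ν x ∂μ := by
  have hint : Integrable (fun x => (ν.rnDeriv μ x).toReal) μ :=
    Measure.integrable_toReal_rnDeriv
  have hle : ∫ x, - llr μ ν x ∂μ ≤ ∫ x, ((ν.rnDeriv μ x).toReal - 1) ∂μ := by
    refine integral_mono_ae h.neg (hint.sub (integrable_const 1)) ?_
    filter_upwards [exp_neg_llr hμν] with x hx
    have := Real.add_one_le_exp (- llr μ ν x)
    rw [hx] at this
    linarith
  have h1 : ∫ x, ((ν.rnDeriv μ x).toReal - 1) ∂μ ≤ 0 := by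
    rw [integral_sub hint (integrable_const 1), integral_const]
    simp only [measure_univ, ENNReal.toReal_one, smul_eq_mul, one_mul]
    have := Measure.setIntegral_toReal_rnDeriv_le (μ := ν) (ν := μ) (s := Set.univ)
      (by simp)
    simp only [Measure.restrict_univ] at this
    simpa using this
  rw [integral_neg] at hle
  linarith

end Helpers

section CompProdHelpers

variable {α β : Type*} [MeasurableSpace α] [MeasurableSpace β]

lemma compProd_withDensity_eq' (p n : Measure α) [IsFiniteMeasure p] [IsFiniteMeasure n]
    (κ : ProbabilityTheory.Kernel α β) [IsMarkovKernel κ] (hpn : p ≪ n) :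
    p.compProd κ = (n.compProd κ).withDensity (fun z => p.rnDeriv n z.1) := by
  have hm : Measurable (fun z : α × β => p.rnDeriv n z.1) :=
    (Measure.measurable_rnDeriv p n).comp measurable_fst
  ext s hs
  rw [withDensity_apply _ hs, Measure.compProd_apply hs]
  rw [← lintegral_indicator hs, Measure.lintegral_compProd (hm.indicator hs)]
  have : ∀ x, ∫⁻ y, s.indicator (fun z : α × β => p.rnDeriv n z.1) (x, y) ∂(κ x)
      = p.rnDeriv n x * κ x (Prod.mk x ⁻¹' s) := by
    intro x
    have : ∀ y, s.indicator (fun z : α × β => p.rnDeriv n z.1) (x, y)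
        = p.rnDeriv n x * (Prod.mk x ⁻¹' s).indicator 1 y := by
      intro y
      by_cases h : (x, y) ∈ s <;>
        simp [Set.indicator, h, Set.mem_preimage]
    simp_rw [this]
    rw [lintegral_const_mul _ (measurable_one.indicator (measurable_prodMk_left hs))]
    congr 1
    rw [lintegral_indicator (measurable_prodMk_left hs)]
    simp
  simp_rw [this]
  conv_lhs => rw [← Measure.withDensity_rnDeriv_eq _ _ hpn]
  rw [lintegral_withDensity_eq_lintegral_mul _ (Measure.measurable_rnDeriv p n)
      (ProbabilityTheory.Kernel.measurable_kernel_prodMk_left hs)]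
  rfl

lemma rnDeriv_compProd_left' (p n : Measure α) [IsFiniteMeasure p] [IsFiniteMeasure n]
    (κ : ProbabilityTheory.Kernel α β) [IsMarkovKernel κ] (hpn : p ≪ n) :
    (p.compProd κ).rnDeriv (n.compProd κ) =ᵐ[n.compProd κ] fun z => p.rnDeriv n z.1 := by
  rw [compProd_withDensity_eq' p n κ hpn]
  exact Measure.rnDeriv_withDensity _ ((Measure.measurable_rnDeriv p n).comp measurable_fst)

end CompProdHelpers

section BorelHelpers

variable {α β : Type*} [MeasurableSpace α] [StandardBorelSpace α]
    [MeasurableSpace β] [StandardBorelSpace β] [Nonempty β]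

lemma ac_compProd_condKernel' {Q P : Measure (α × β)} [IsFiniteMeasure Q] [IsFiniteMeasure P]
    (hQP : Q ≪ P) : Q ≪ Q.fst.compProd P.condKernel := by
  refine Measure.AbsolutelyContinuous.mk fun s hs h0 => ?_
  rw [Measure.compProd_apply hs,
    lintegral_eq_zero_iff (ProbabilityTheory.Kernel.measurable_kernel_prodMk_left hs)] at h0
  set T : Set α := {x | P.condKernel x (Prod.mk x ⁻¹' s) = 0} with hT
  have hTm : MeasurableSet T :=
    (ProbabilityTheory.Kernel.measurable_kernel_prodMk_left hs) (measurableSet_singleton 0)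
  have hTc : Q.fst Tᶜ = 0 := by
    have := ae_iff.mp h0
    simpa [T, Set.compl_setOf] using this
  have hP0 : P (s ∩ T ×ˢ Set.univ) = 0 := by
    conv_lhs => rw [← P.disintegrate P.condKernel]
    rw [Measure.compProd_apply (hs.inter (hTm.prod MeasurableSet.univ))]
    refine lintegral_eq_zero_iff (ProbabilityTheory.Kernel.measurable_kernel_prodMk_left
      (hs.inter (hTm.prod MeasurableSet.univ))) |>.mpr ?_
    refine Filter.Eventually.of_forall fun x => ?_
    by_cases hx : x ∈ T
    · refine measure_mono_null (fun y hy => ?_) hx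
      exact hy.1
    · exact measure_mono_null (fun y hy => absurd hy.2.1 hx) measure_empty
  refine le_antisymm ?_ zero_le
  calc Q s ≤ Q (s ∩ T ×ˢ Set.univ) + Q (Prod.fst ⁻¹' Tᶜ) := by
        refine (measure_mono fun z hz => ?_).trans (measure_union_le _ _)
        by_cases hzT : z.1 ∈ T
        · exact Or.inl ⟨hz, hzT, trivial⟩
        · exact Or.inr hzT
    _ = 0 := by
        rw [hQP hP0, ← Measure.fst_apply hTm.compl, hTc]
        simp

lemma llr_chain' {Q P : Measure (α × β)} [IsProbabilityMeasure Q] [IsProbabilityMeasure P]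
    (hQP : Q ≪ P) :
    llr Q P =ᵐ[Q]
      fun z => llr Q (Q.fst.compProd P.condKernel) z + llr Q.fst P.fst z.1 := by
  set P' := Q.fst.compProd P.condKernel with hP'
  have hfst : Q.fst ≪ P.fst := hQP.map measurable_fst
  have hQP' : Q ≪ P' := ac_compProd_condKernel' hQP
  have hP'P : P' ≪ P := by
    have := Measure.AbsolutelyContinuous.compProd_left hfst P.condKernel
    rwa [P.disintegrate P.condKernel] at this
  have h_mul : Q.rnDeriv P' * P'.rnDeriv P =ᵐ[P] Q.rnDeriv P :=
    Measure.rnDeriv_mul_rnDeriv hQP'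
  have h_eq : P'.rnDeriv P =ᵐ[P] fun z => Q.fst.rnDeriv P.fst z.1 := by
    have h1 := rnDeriv_compProd_left' Q.fst P.fst P.condKernel hfst
    rwa [P.disintegrate P.condKernel] at h1
  have hpos1 : ∀ᵐ z ∂Q, 0 < Q.rnDeriv P' z := Measure.rnDeriv_pos hQP'
  have hlt1 : ∀ᵐ z ∂Q, Q.rnDeriv P' z < ∞ := hQP'.ae_le (Measure.rnDeriv_lt_top Q P')
  have hpos2' : ∀ᵐ x ∂Q.fst, 0 < Q.fst.rnDeriv P.fst x := Measure.rnDeriv_pos hfst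
  have hlt2' : ∀ᵐ x ∂Q.fst, Q.fst.rnDeriv P.fst x < ∞ :=
    hfst.ae_le (Measure.rnDeriv_lt_top Q.fst P.fst)
  have hpos2 : ∀ᵐ z ∂Q, 0 < Q.fst.rnDeriv P.fst z.1 :=
    ae_of_ae_map measurable_fst.aemeasurable hpos2'
  have hlt2 : ∀ᵐ z ∂Q, Q.fst.rnDeriv P.fst z.1 < ∞ :=
    ae_of_ae_map measurable_fst.aemeasurable hlt2'
  filter_upwards [hQP.ae_le h_mul, hQP.ae_le h_eq, hpos1, hlt1, hpos2, hlt2]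
    with z hmul heq h1 h2 h3 h4
  have ha : (Q.rnDeriv P' z).toReal ≠ 0 :=
    (ENNReal.toReal_pos h1.ne' h2.ne).ne'
  have hb : ((Q.fst.rnDeriv P.fst z.1)).toReal ≠ 0 :=
    (ENNReal.toReal_pos h3.ne' h4.ne).ne'
  rw [llr, ← hmul, Pi.mul_apply, heq, ENNReal.toReal_mul, Real.log_mul ha hb]
  rfl

end BorelHelpers

/-- **half-bridge.** For probability measures `P` on `α × β` and `π` on `α`
(with `α`, `β` standard Borel): (i) every probability measure `Q` on `α × β` with first
marginal `π` satisfies `KL(Q ‖ P) ≥ KL(π ‖ P.fst)`; (ii) the measure `Q* = π ⊗ₘ P.condKernel`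
has first marginal `π` and attains equality, hence minimises `KL(· ‖ P)` subject to the
marginal constraint. -/
theorem kl_half_bridge
    {α β : Type*} [MeasurableSpace α] [StandardBorelSpace α]
    [MeasurableSpace β] [StandardBorelSpace β] [Nonempty β]
    (P : Measure (α × β)) [IsProbabilityMeasure P]
    (π : Measure α) [IsProbabilityMeasure π] :
    (∀ Q : Measure (α × β), IsProbabilityMeasure Q → Q.fst = π →
      klDiv' π P.fst ≤ klDiv' Q P) ∧
    ((π.compProd P.condKernel).fst = π ∧
      klDiv' (π.compProd P.condKernel) P = klDiv' π P.fst) := by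
  have hQfst_eq : (π.compProd P.condKernel).fst = π :=
    Measure.fst_compProd π P.condKernel
  refine ⟨?_, hQfst_eq, ?_⟩
  · -- Part (i)
    intro Q hQprob hQfst
    subst hQfst
    by_cases hc : Q ≪ P ∧ Integrable (llr Q P) Q
    swap
    · have hT : klDiv' Q P = ⊤ := by rw [klDiv', if_neg hc]
      rw [hT]
      exact le_top
    obtain ⟨hQP, hQint⟩ := hc
    have hfst : Q.fst ≪ P.fst := hQP.map measurable_fst
    have hQP' : Q ≪ Q.fst.compProd P.condKernel := ac_compProd_condKernel' hQP
    have hchain := llr_chain' hQP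
    set P' := Q.fst.compProd P.condKernel with hP'
    have hQmap : Q.fst = Q.map Prod.fst := rfl
    have hmeas_g : Measurable (llr Q.fst P.fst) := measurable_llr _ _
    set g := llr Q.fst P.fst with hgdef
    -- negative parts integrable
    have hneg2' : Integrable (fun x => max (- g x) 0) Q.fst :=
      integrable_neg_part_llr' hfst
    have hneg2 : Integrable (fun z : α × β => max (- g z.1) 0) Q := by
      rw [hQmap] at hneg2'
      exact (integrable_map_measure (hmeas_g.neg.max measurable_const).aestronglyMeasurable
        measurable_fst.aemeasurable).mp hneg2'
    have hneg1 : Integrable (fun z => max (- llr Q P' z) 0) Q :=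
      integrable_neg_part_llr' hQP'
    -- positive part of g ∘ fst integrable
    have hpos_part : Integrable (fun z : α × β => max (g z.1) 0) Q := by
      refine Integrable.mono' (hQint.pos_part.add hneg1)
        ((hmeas_g.comp measurable_fst).max measurable_const).aestronglyMeasurable ?_
      filter_upwards [hchain] with z hz
      simp only [Pi.add_apply]
      rw [Real.norm_eq_abs, abs_of_nonneg (le_max_right _ _)]
      have hle : g z.1 = llr Q P z - llr Q P' z := by
        rw [hz]; ring
      refine max_le ?_ (add_nonneg (le_max_right _ _) (le_max_right _ _))
      rw [hle]
      have h1 : llr Q P z ≤ max (llr Q P z) 0 := le_max_left _ _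
      have h2 : - llr Q P' z ≤ max (- llr Q P' z) 0 := le_max_left _ _
      linarith
    have hg : Integrable (fun z : α × β => g z.1) Q := by
      have heq : (fun z : α × β => g z.1)
          = fun z => max (g z.1) 0 - max (- g z.1) 0 := by
        funext z
        rw [max_zero_sub_max_neg_zero_eq_self]
      rw [heq]
      exact hpos_part.sub hneg2
    have hgπ : Integrable g Q.fst := by
      rw [hQmap]
      exact (integrable_map_measure hmeas_g.aestronglyMeasurable
        measurable_fst.aemeasurable).mpr hg
    have hP'int : Integrable (llr Q P') Q := by
      refine Integrable.congr (hQint.sub hg) ?_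
      filter_upwards [hchain] with z hz
      simp only [Pi.sub_apply]
      rw [hz]; ring
    have h0 : 0 ≤ ∫ z, llr Q P' z ∂Q := integral_llr_nonneg'' hQP' hP'int
    have hsum : ∫ z, llr Q P z ∂Q
        = ∫ z, llr Q P' z ∂Q + ∫ z, g z.1 ∂Q := by
      rw [← integral_add hP'int hg]
      exact integral_congr_ae hchain
    have hmap_eq : ∫ x, g x ∂Q.fst = ∫ z, g z.1 ∂Q := by
      rw [hQmap]
      exact integral_map measurable_fst.aemeasurable hmeas_g.aestronglyMeasurable
    rw [klDiv', klDiv', if_pos ⟨hfst, hgπ⟩, if_pos ⟨hQP, hQint⟩]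
    refine ENNReal.ofReal_le_ofReal ?_
    rw [hsum, hmap_eq]
    linarith
  · -- Part (ii)
    set Q := π.compProd P.condKernel with hQ
    by_cases hpn : π ≪ P.fst
    · have hQP : Q ≪ P := by
        have := Measure.AbsolutelyContinuous.compProd_left hpn P.condKernel
        rwa [P.disintegrate P.condKernel] at this
      have hmeas_g : Measurable (llr π P.fst) := measurable_llr _ _
      set g := llr π P.fst with hgdef
      have hllr : llr Q P =ᵐ[Q] fun z => g z.1 := by
        have h1 := rnDeriv_compProd_left' π P.fst P.condKernel hpn
        rw [P.disintegrate P.condKernel] at h1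
        filter_upwards [hQP.ae_le h1] with z hz
        rw [llr, hgdef, llr, hz]
      have hQmap : π = Q.map Prod.fst := hQfst_eq.symm
      have hint_iff : Integrable (llr Q P) Q ↔ Integrable g π := by
        rw [integrable_congr hllr, hQmap]
        exact (integrable_map_measure hmeas_g.aestronglyMeasurable
          measurable_fst.aemeasurable).symm
      have hmap_eq : ∫ x, g x ∂π = ∫ z, g z.1 ∂Q := by
        rw [hQmap]
        exact integral_map measurable_fst.aemeasurable hmeas_g.aestronglyMeasurable
      by_cases hint : Integrable g π
      · rw [klDiv', klDiv', if_pos ⟨hQP, hint_iff.mpr hint⟩, if_pos ⟨hpn, hint⟩]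
        congr 1
        rw [integral_congr_ae hllr, hmap_eq]
      · rw [klDiv', klDiv', if_neg (fun h => hint (hint_iff.mp h.2)),
          if_neg (fun h => hint h.2)]
    · have hnQP : ¬ Q ≪ P := by
        intro h
        exact hpn (hQfst_eq ▸ h.map measurable_fst)
      rw [klDiv', klDiv', if_neg (fun h => hnQP h.1), if_neg (fun h => hpn h.1)]
end

section
/- Fix d ≥ 1 and ᾱ ∈ (0,1), and let k(x, x₀) = (2π(1−ᾱ))^{−d/2} exp(−‖x − √ᾱ x₀‖²/(2(1−ᾱ))) be the Gaussian forward transition kernel on ℝ^d. Let π be a probability measure on ℝ^d and define m(x) = ∫ k(x, x₀) dπ(x₀). Then m is everywhere positive and differentiable on ℝ^d, the gradient may be taken under the integral sign, ∇m(x) = ∫ ∇_x k(x, x₀) dπ(x₀), and consequently ∇ log m(x) = (1/m(x)) · ∫ ( −(x − √ᾱ x₀)/(1−ᾱ) ) · k(x, x₀) dπ(x₀); i.e. the score of the Gaussian-smoothed measure equals the average of the forward-transition score ∇_x log k(x, x₀) against the normalized weights k(x, x₀)/m(x) with respect to π. -/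
open MeasureTheory ProbabilityTheory

set_option autoImplicit false

/-- The Gaussian forward transition kernel
`k(x, x₀) = (2π(1−ᾱ))^{−d/2} exp(−‖x − √ᾱ x₀‖²/(2(1−ᾱ)))` on `ℝ^d`. -/
noncomputable def gaussKernel (d : ℕ) (ab : ℝ) (x x₀ : EuclideanSpace ℝ (Fin d)) : ℝ :=
  (2 * Real.pi * (1 - ab)) ^ (-(d : ℝ) / 2) *
    Real.exp (-‖x - Real.sqrt ab • x₀‖ ^ 2 / (2 * (1 - ab)))


open InnerProductSpace

lemma gaussKernel_pos {d : ℕ} {ab : ℝ} (hab : ab < 1) (x x₀ : EuclideanSpace ℝ (Fin d)) :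
    0 < gaussKernel d ab x x₀ := by
  have hσ : (0:ℝ) < 1 - ab := by linarith
  have : (0:ℝ) < 2 * Real.pi * (1 - ab) := by positivity
  exact mul_pos (Real.rpow_pos_of_pos this _) (Real.exp_pos _)

lemma hasGradientAt_gaussKernel {d : ℕ} {ab : ℝ} (hab : ab < 1)
    (x x₀ : EuclideanSpace ℝ (Fin d)) :
    HasGradientAt (fun x' => gaussKernel d ab x' x₀)
      (gaussKernel d ab x x₀ • ((-(1 - ab)⁻¹ : ℝ) • (x - Real.sqrt ab • x₀))) x := by
  have hσ : (0:ℝ) < 1 - ab := by linarith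
  set c : EuclideanSpace ℝ (Fin d) := Real.sqrt ab • x₀ with hc
  set C : ℝ := (2 * Real.pi * (1 - ab)) ^ (-(d : ℝ) / 2) with hC
  have hns : HasFDerivAt (fun x' : EuclideanSpace ℝ (Fin d) => ‖x' - c‖ ^ 2)
      (2 • (innerSL ℝ (x - c))) x := by
    simpa using ((hasFDerivAt_id x).sub_const c).norm_sq
  have h1 := hns.const_mul (-(2 * (1 - ab))⁻¹)
  have h2 := (Real.hasDerivAt_exp (-(2 * (1 - ab))⁻¹ * ‖x - c‖ ^ 2)).comp_hasFDerivAt x h1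
  have h3 := h2.const_mul C
  have hfun : (fun x' => gaussKernel d ab x' x₀)
      = fun x' => C * Real.exp (-(2 * (1 - ab))⁻¹ * ‖x' - c‖ ^ 2) := by
    funext x'
    simp only [gaussKernel, hC, hc]
    congr 1
    ring
  have key : HasFDerivAt (fun x' => gaussKernel d ab x' x₀)
      (C • Real.exp (-(2 * (1 - ab))⁻¹ * ‖x - c‖ ^ 2) •
        ((-(2 * (1 - ab))⁻¹ : ℝ) • (2 • (innerSL ℝ (x - c))))) x := by
    rw [hfun]; exact h3
  rw [hasGradientAt_iff_hasFDerivAt]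
  have heq : (toDual ℝ (EuclideanSpace ℝ (Fin d)))
      (gaussKernel d ab x x₀ • ((-(1 - ab)⁻¹ : ℝ) • (x - c)))
      = C • Real.exp (-(2 * (1 - ab))⁻¹ * ‖x - c‖ ^ 2) •
        ((-(2 * (1 - ab))⁻¹ : ℝ) • (2 • (innerSL ℝ (x - c)))) := by
    ext y
    simp only [toDual_apply_apply, ContinuousLinearMap.smul_apply, innerSL_apply_apply, smul_eq_mul,
      real_inner_smul_left, gaussKernel, hC, hc, nsmul_eq_mul, Nat.cast_ofNat,
      Pi.smul_apply]
    rw [show -‖x - Real.sqrt ab • x₀‖ ^ 2 / (2 * (1 - ab))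
        = -(2 * (1 - ab))⁻¹ * ‖x - Real.sqrt ab • x₀‖ ^ 2 by ring]
    field_simp
  rw [heq]
  exact key

lemma mul_exp_bound {σ2 : ℝ} (hσ : 0 < σ2) {t : ℝ} (ht : 0 ≤ t) :
    t * Real.exp (-t ^ 2 / (2 * σ2)) ≤ 16 * Real.sqrt σ2 := by
  set s := Real.sqrt σ2 with hs
  have hs0 : 0 < s := Real.sqrt_pos.mpr hσ
  have hs2 : s ^ 2 = σ2 := Real.sq_sqrt hσ.le
  rcases le_or_gt t s with h | h
  · have hexp : Real.exp (-t ^ 2 / (2 * σ2)) ≤ 1 := by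
      apply Real.exp_le_one_iff.mpr
      apply div_nonpos_of_nonpos_of_nonneg (neg_nonpos.mpr (sq_nonneg t)) (by positivity)
    nlinarith [Real.exp_pos (-t ^ 2 / (2 * σ2))]
  · have ht0 : 0 < t := hs0.trans h
    set u := t ^ 2 / (2 * σ2) with hu
    have hu0 : 0 < u := div_pos (by positivity) (by positivity)
    have h4 : u / 2 ≤ Real.exp (u / 2) := by
      have := Real.add_one_le_exp (u / 2); linarith
    have hexpu : u ^ 2 / 4 ≤ Real.exp u := by
      have : Real.exp u = Real.exp (u / 2) * Real.exp (u / 2) := by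
        rw [← Real.exp_add]; ring_nf
      nlinarith
    have hEpos := Real.exp_pos (-u)
    have hinv : Real.exp (-u) ≤ 4 / u ^ 2 := by
      rw [Real.exp_neg]
      rw [inv_le_iff_one_le_mul₀ (Real.exp_pos u)] at *
      · rw [div_mul_eq_mul_div, le_div_iff₀ (by positivity)]
        nlinarith
    have htu : t * Real.exp (-u) ≤ 16 * σ2 ^ 2 / t ^ 3 := by
      have : t * Real.exp (-u) ≤ t * (4 / u ^ 2) := by
        apply mul_le_mul_of_nonneg_left hinv ht
      calc t * Real.exp (-u) ≤ t * (4 / u ^ 2) := this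
        _ = 16 * σ2 ^ 2 / t ^ 3 := by
            rw [hu]; field_simp [ht0.ne']; ring
    have hlast : 16 * σ2 ^ 2 / t ^ 3 ≤ 16 * s := by
      rw [div_le_iff₀ (by positivity)]
      nlinarith [pow_le_pow_left₀ hs0.le h.le 3]
    have : -t ^ 2 / (2 * σ2) = -u := by rw [hu]; ring
    rw [this]
    linarith

/-- The Gaussian-smoothed density `m(x) = ∫ k(x,x₀) dπ(x₀)` is positive and
differentiable, the gradient passes under the integral sign, and the score of `m` is the
posterior average of the forward-transition score `−(x − √ᾱ x₀)/(1−ᾱ)`. -/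
theorem score_of_gaussian_smoothed_measure
    (d : ℕ) (hd : 1 ≤ d) (ᾱ : ℝ) (hᾱ : ᾱ ∈ Set.Ioo (0:ℝ) 1)
    (π : Measure (EuclideanSpace ℝ (Fin d))) [IsProbabilityMeasure π]
    (m : EuclideanSpace ℝ (Fin d) → ℝ)
    (hm : ∀ x, m x = ∫ x₀, gaussKernel d ᾱ x x₀ ∂π) :
    ∀ x : EuclideanSpace ℝ (Fin d),
      0 < m x ∧ DifferentiableAt ℝ m x ∧
      gradient m x = ∫ x₀, gradient (fun x' => gaussKernel d ᾱ x' x₀) x ∂π ∧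
      gradient (fun x' => Real.log (m x')) x
        = (m x)⁻¹ • ∫ x₀,
            gaussKernel d ᾱ x x₀ • ((-(1 - ᾱ)⁻¹ : ℝ) • (x - Real.sqrt ᾱ • x₀)) ∂π := by
  obtain ⟨hᾱ0, hᾱ1⟩ := hᾱ
  have hσ : (0:ℝ) < 1 - ᾱ := by linarith
  set C : ℝ := (2 * Real.pi * (1 - ᾱ)) ^ (-(d : ℝ) / 2) with hC
  have hCpos : 0 < C := Real.rpow_pos_of_pos (by positivity) _
  -- kernel bounded by C
  have hkle : ∀ x' x₀ : EuclideanSpace ℝ (Fin d), gaussKernel d ᾱ x' x₀ ≤ C := by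
    intro x' x₀
    have : Real.exp (-‖x' - Real.sqrt ᾱ • x₀‖ ^ 2 / (2 * (1 - ᾱ))) ≤ 1 :=
      Real.exp_le_one_iff.mpr
        (div_nonpos_of_nonpos_of_nonneg (neg_nonpos.mpr (sq_nonneg _)) (by positivity))
    calc gaussKernel d ᾱ x' x₀ ≤ C * 1 := by
          unfold gaussKernel; exact mul_le_mul_of_nonneg_left this hCpos.le
      _ = C := mul_one C
  have hkcont : ∀ x' : EuclideanSpace ℝ (Fin d),
      Continuous (fun x₀ => gaussKernel d ᾱ x' x₀) := by
    intro x'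
    unfold gaussKernel
    fun_prop
  have hkint : ∀ x' : EuclideanSpace ℝ (Fin d),
      Integrable (fun x₀ => gaussKernel d ᾱ x' x₀) π := by
    intro x'
    refine Integrable.mono' (integrable_const C) (hkcont x').aestronglyMeasurable
      (ae_of_all _ fun x₀ => ?_)
    rw [Real.norm_eq_abs, abs_of_pos (gaussKernel_pos hᾱ1 x' x₀)]
    exact hkle x' x₀
  intro x
  -- positivity of m
  have hmpos : 0 < m x := by
    rw [hm]
    have hsupp : Function.support (fun x₀ => gaussKernel d ᾱ x x₀) = Set.univ :=
      Set.eq_univ_of_forall fun x₀ => (gaussKernel_pos hᾱ1 x x₀).ne'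
    rw [integral_pos_iff_support_of_nonneg
      (fun x₀ => (gaussKernel_pos hᾱ1 x x₀).le) (hkint x)]
    rw [hsupp]
    simp
  -- the vector-valued integrand and its bound
  set v : EuclideanSpace ℝ (Fin d) → EuclideanSpace ℝ (Fin d) → EuclideanSpace ℝ (Fin d) :=
    fun x' x₀ => gaussKernel d ᾱ x' x₀ • ((-(1 - ᾱ)⁻¹ : ℝ) • (x' - Real.sqrt ᾱ • x₀)) with hv
  have hvnorm : ∀ x' x₀, ‖v x' x₀‖ ≤ C * (1 - ᾱ)⁻¹ * (16 * Real.sqrt (1 - ᾱ)) := by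
    intro x' x₀
    have hk := gaussKernel_pos hᾱ1 x' x₀
    rw [hv]
    simp only [norm_smul, Real.norm_eq_abs, abs_of_pos hk, abs_neg, abs_inv,
      abs_of_pos hσ]
    set t := ‖x' - Real.sqrt ᾱ • x₀‖ with hT
    have ht : 0 ≤ t := norm_nonneg _
    have key := mul_exp_bound hσ ht
    unfold gaussKernel
    rw [← hC]
    calc C * Real.exp (-t ^ 2 / (2 * (1 - ᾱ))) * ((1 - ᾱ)⁻¹ * t)
        = C * (1 - ᾱ)⁻¹ * (t * Real.exp (-t ^ 2 / (2 * (1 - ᾱ)))) := by ring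
      _ ≤ C * (1 - ᾱ)⁻¹ * (16 * Real.sqrt (1 - ᾱ)) := by
          apply mul_le_mul_of_nonneg_left key (by positivity)
  have hvcont : ∀ x', Continuous (fun x₀ => v x' x₀) := by
    intro x'
    rw [hv]
    exact ((hkcont x').smul (by fun_prop))
  have hvint : ∀ x', Integrable (fun x₀ => v x' x₀) π := by
    intro x'
    exact Integrable.mono' (integrable_const _) (hvcont x').aestronglyMeasurable
      (ae_of_all _ fun x₀ => hvnorm x' x₀)
  -- derivative under the integral
  set F' : EuclideanSpace ℝ (Fin d) → EuclideanSpace ℝ (Fin d) →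
      (EuclideanSpace ℝ (Fin d) →L[ℝ] ℝ) :=
    fun x' x₀ => (InnerProductSpace.toDual ℝ (EuclideanSpace ℝ (Fin d))) (v x' x₀) with hF'
  have hderiv : HasFDerivAt (fun x' => ∫ x₀, gaussKernel d ᾱ x' x₀ ∂π)
      (∫ x₀, F' x x₀ ∂π) x := by
    apply hasFDerivAt_integral_of_dominated_of_fderiv_le (s := Metric.ball x 1) (Metric.ball_mem_nhds x one_pos)
      (Filter.Eventually.of_forall fun x' => (hkcont x').aestronglyMeasurable)
      (hkint x)
    · exact ((InnerProductSpace.toDual ℝ _).continuous.comp (hvcont x)).aestronglyMeasurable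
    · refine ae_of_all _ fun x₀ x' _ => ?_
      rw [hF']
      simp only [LinearIsometryEquiv.norm_map]
      exact hvnorm x' x₀
    · exact integrable_const _
    · refine ae_of_all _ fun x₀ x' _ => ?_
      exact (hasGradientAt_gaussKernel hᾱ1 x' x₀).hasFDerivAt
  have hIF' : (∫ x₀, F' x x₀ ∂π)
      = (InnerProductSpace.toDual ℝ (EuclideanSpace ℝ (Fin d))) (∫ x₀, v x x₀ ∂π) := by
    rw [hF']
    exact ContinuousLinearEquiv.integral_comp_comm
      (InnerProductSpace.toDual ℝ (EuclideanSpace ℝ (Fin d))).toContinuousLinearEquiv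
      (fun x₀ => v x x₀)
  have hgradm : HasGradientAt m (∫ x₀, v x x₀ ∂π) x := by
    rw [hasGradientAt_iff_hasFDerivAt, ← hIF', funext hm]
    exact hderiv
  refine ⟨hmpos, hgradm.hasFDerivAt.differentiableAt, ?_, ?_⟩
  · rw [hgradm.gradient]
    refine integral_congr_ae (ae_of_all _ fun x₀ => ?_)
    exact ((hasGradientAt_gaussKernel hᾱ1 x x₀).gradient).symm
  · have hlog := (Real.hasDerivAt_log hmpos.ne').comp_hasFDerivAt x hgradm.hasFDerivAt
    have : HasGradientAt (fun x' => Real.log (m x')) ((m x)⁻¹ • ∫ x₀, v x x₀ ∂π) x := by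
      rw [hasGradientAt_iff_hasFDerivAt]
      rw [_root_.map_smul]
      exact hlog
    exact this.gradient
end
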